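/- Let S and D be independent real random variables with S bounded, E[S] = b(δ) and E[b(D)] = b(δ) for a fixed real δ, where b : R → (−1,1) is increasing and measurable, and suppose D has the stationarity property D =(dist) D + 2K(S − b(D)) for some K > 0, with E[(D − δ)²] < ∞. Then E[|D − δ|·|b(D) − b(δ)|] = K·Var(b(D)) + K·Var(S), and in particular K·Var(S) ≤ E[|D − δ|·|b(D) − b(δ)|] ≤ 2K. -/

import Mathlib

open MeasureTheory ProbabilityTheory

theorem stmt_13 {Ω : Type*} [MeasureSpace Ω] [IsProbabilityMeasure (ℙ : Measure Ω)]
    (S D : Ω → ℝ) (b : ℝ → ℝ) (δ K : ℝ) (hK : 0 < K)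
    (hb_mono : Monotone b) (hb_meas : Measurable b)
    (hb_range : ∀ u, b u ∈ Set.Ioo (-1 : ℝ) 1)
    (hS_meas : Measurable S) (hD_meas : Measurable D)
    (hS_range : ∀ ω, S ω ∈ Set.Icc (-1 : ℝ) 1)
    (hindep : IndepFun S D)
    (hES : ∫ ω, S ω = b δ)
    (hEbD : ∫ ω, b (D ω) = b δ)
    (hstat : Measure.map D ℙ =
      Measure.map (fun ω => D ω + 2 * K * (S ω - b (D ω))) ℙ)
    (hL2 : Integrable (fun ω => (D ω - δ) ^ 2)) :
    (∫ ω, |D ω - δ| * |b (D ω) - b δ|) =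
        K * variance (fun ω => b (D ω)) ℙ + K * variance S ℙ ∧
      K * variance S ℙ ≤ ∫ ω, |D ω - δ| * |b (D ω) - b δ| ∧
      (∫ ω, |D ω - δ| * |b (D ω) - b δ|) ≤ 2 * K := by
  have hbD_meas : Measurable fun ω => b (D ω) := hb_meas.comp hD_meas
  have hS_bdd : ∀ ω, ‖S ω‖ ≤ 1 := fun ω => by
    rw [Real.norm_eq_abs]; exact abs_le.2 ⟨(hS_range ω).1, (hS_range ω).2⟩
  have hbD_bdd : ∀ ω, ‖b (D ω)‖ ≤ 1 := fun ω => by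
    rw [Real.norm_eq_abs]
    exact abs_le.2 ⟨(hb_range _).1.le, (hb_range _).2.le⟩
  -- g = S - b(D), bounded by 2
  set g : Ω → ℝ := fun ω => S ω - b (D ω) with hg_def
  have hg_meas : Measurable g := hS_meas.sub hbD_meas
  have hg_bdd : ∀ ω, ‖g ω‖ ≤ 2 := fun ω => by
    have := hS_bdd ω; have := hbD_bdd ω
    simp only [Real.norm_eq_abs] at *
    calc |g ω| ≤ |S ω| + |b (D ω)| := abs_sub _ _
      _ ≤ 2 := by linarith
  -- Memℒp / integrability facts
  have hS_mem : MemLp S 2 ℙ :=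
    MemLp.of_bound hS_meas.aestronglyMeasurable 1 (Filter.Eventually.of_forall hS_bdd)
  have hbD_mem : MemLp (fun ω => b (D ω)) 2 ℙ :=
    MemLp.of_bound hbD_meas.aestronglyMeasurable 1 (Filter.Eventually.of_forall hbD_bdd)
  have hDδ_meas : Measurable fun ω => D ω - δ := hD_meas.sub measurable_const
  have hDδ_mem : MemLp (fun ω => D ω - δ) 2 ℙ :=
    (memLp_two_iff_integrable_sq hDδ_meas.aestronglyMeasurable).2 hL2
  have hD1 : Integrable (fun ω => D ω - δ) := hDδ_mem.integrable one_le_two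
  have hS_int : Integrable S := hS_mem.integrable one_le_two
  have hbD_int : Integrable (fun ω => b (D ω)) := hbD_mem.integrable one_le_two
  have hI2 : Integrable (fun ω => g ω * (D ω - δ)) :=
    hD1.bdd_mul hg_meas.aestronglyMeasurable (Filter.Eventually.of_forall hg_bdd)
  have hI3 : Integrable (fun ω => g ω ^ 2) :=
    (memLp_two_iff_integrable_sq hg_meas.aestronglyMeasurable).1
      (MemLp.of_bound hg_meas.aestronglyMeasurable 2 (Filter.Eventually.of_forall hg_bdd))
  have hDS_int : Integrable (fun ω => S ω * (D ω - δ)) :=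
    hD1.bdd_mul hS_meas.aestronglyMeasurable (Filter.Eventually.of_forall hS_bdd)
  have hDbD_int : Integrable (fun ω => b (D ω) * (D ω - δ)) :=
    hD1.bdd_mul hbD_meas.aestronglyMeasurable (Filter.Eventually.of_forall hbD_bdd)
  have hSbD_int : Integrable (fun ω => S ω * b (D ω)) :=
    hbD_int.bdd_mul hS_meas.aestronglyMeasurable (Filter.Eventually.of_forall hS_bdd)
  have hS2_int : Integrable (fun ω => S ω ^ 2) :=
    (memLp_two_iff_integrable_sq hS_meas.aestronglyMeasurable).1 hS_mem
  have hbD2_int : Integrable (fun ω => b (D ω) ^ 2) :=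
    (memLp_two_iff_integrable_sq hbD_meas.aestronglyMeasurable).1 hbD_mem
  -- second-moment equality from stationarity
  set f : Ω → ℝ := fun ω => D ω + 2 * K * (S ω - b (D ω)) with hf_def
  have hf_meas : Measurable f := hD_meas.add (measurable_const.mul (hS_meas.sub hbD_meas))
  have hsq_meas : Measurable fun x : ℝ => (x - δ) ^ 2 :=
    (measurable_id.sub measurable_const).pow measurable_const
  have hmom : ∫ ω, (D ω - δ) ^ 2 = ∫ ω, (f ω - δ) ^ 2 := by
    have h1 : ∫ x, (x - δ) ^ 2 ∂(Measure.map D ℙ) = ∫ ω, (D ω - δ) ^ 2 :=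
      integral_map hD_meas.aemeasurable hsq_meas.aestronglyMeasurable
    have h2 : ∫ x, (x - δ) ^ 2 ∂(Measure.map f ℙ) = ∫ ω, (f ω - δ) ^ 2 :=
      integral_map hf_meas.aemeasurable hsq_meas.aestronglyMeasurable
    rw [← h1, ← h2, hstat]
  have hfL2 : Integrable (fun ω => (f ω - δ) ^ 2) := by
    have h1 : Integrable (fun x => (x - δ) ^ 2) (Measure.map D ℙ) := by
      rw [integrable_map_measure hsq_meas.aestronglyMeasurable hD_meas.aemeasurable]
      exact hL2
    rw [hstat] at h1
    rw [integrable_map_measure hsq_meas.aestronglyMeasurable hf_meas.aemeasurable] at h1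
    exact h1
  have hexpand : (fun ω => (f ω - δ) ^ 2) =
      fun ω => (D ω - δ) ^ 2 + ((4 * K) * (g ω * (D ω - δ)) + (4 * K ^ 2) * g ω ^ 2) := by
    funext ω; simp only [hf_def, hg_def]; ring
  have hIb : Integrable (fun ω => 4 * K * (g ω * (D ω - δ))) := by exact hI2.const_mul _
  have hIc : Integrable (fun ω => 4 * K ^ 2 * g ω ^ 2) := by exact hI3.const_mul _
  have hIa : Integrable (fun ω => 4 * K * (g ω * (D ω - δ)) + 4 * K ^ 2 * g ω ^ 2) := by
    exact hIb.add hIc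
  have hmom2 : ∫ ω, (f ω - δ) ^ 2 =
      (∫ ω, (D ω - δ) ^ 2) +
        ((4 * K) * (∫ ω, g ω * (D ω - δ)) + (4 * K ^ 2) * ∫ ω, g ω ^ 2) := by
    rw [hexpand, integral_add hL2 hIa, integral_add hIb hIc,
      integral_const_mul, integral_const_mul]
  have hkey : ∫ ω, g ω * (D ω - δ) = -K * ∫ ω, g ω ^ 2 := by
    have h0 : (4 * K) * (∫ ω, g ω * (D ω - δ)) + (4 * K ^ 2) * ∫ ω, g ω ^ 2 = 0 := by
      have := hmom.trans hmom2; linarith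
    have h4 : (4 * K) * ((∫ ω, g ω * (D ω - δ)) + K * ∫ ω, g ω ^ 2) = 0 := by
      linear_combination h0
    have hne : (4 * K) ≠ 0 := by positivity
    have := (mul_eq_zero.1 h4).resolve_left hne
    linarith
  -- independence consequences
  have hind1 : IndepFun S (fun ω => D ω - δ) := by
    have := hindep.comp measurable_id (measurable_id.sub (measurable_const : Measurable fun _ : ℝ => δ))
    exact this
  have hind2 : IndepFun S (fun ω => b (D ω)) := hindep.comp measurable_id hb_meas
  have hPS : ∫ ω, S ω * (D ω - δ) = b δ * ∫ ω, D ω - δ := by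
    have := hind1.integral_mul_eq_mul_integral hS_int.aestronglyMeasurable hD1.aestronglyMeasurable
    simpa [Pi.mul_apply, hES] using this
  have hPSb : ∫ ω, S ω * b (D ω) = b δ * b δ := by
    have := hind2.integral_mul_eq_mul_integral hS_int.aestronglyMeasurable hbD_int.aestronglyMeasurable
    simpa [Pi.mul_apply, hES, hEbD] using this
  -- ∫ g * (D - δ)
  have hA : ∫ ω, g ω * (D ω - δ) =
      b δ * (∫ ω, D ω - δ) - ∫ ω, b (D ω) * (D ω - δ) := by
    have : (fun ω => g ω * (D ω - δ)) =
        fun ω => S ω * (D ω - δ) - b (D ω) * (D ω - δ) := by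
      funext ω; simp only [hg_def]; ring
    rw [this, integral_sub hDS_int hDbD_int, hPS]
  -- ∫ g²  = Var S + Var bD
  have hVarS : variance S ℙ = (∫ ω, S ω ^ 2) - b δ ^ 2 := by
    rw [variance_eq_sub hS_mem]
    simp only [Pi.pow_apply, hES]
  have hVarbD : variance (fun ω => b (D ω)) ℙ = (∫ ω, b (D ω) ^ 2) - b δ ^ 2 := by
    rw [variance_eq_sub hbD_mem]
    simp only [Pi.pow_apply, hEbD]
  have hB : ∫ ω, g ω ^ 2 = variance S ℙ + variance (fun ω => b (D ω)) ℙ := by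
    have hptw : (fun ω => g ω ^ 2) =
        fun ω => S ω ^ 2 - 2 * (S ω * b (D ω)) + b (D ω) ^ 2 := by
      funext ω; simp only [hg_def]; ring
    have hIe : Integrable (fun ω => 2 * (S ω * b (D ω))) := by exact hSbD_int.const_mul 2
    have hId : Integrable (fun ω => S ω ^ 2 - 2 * (S ω * b (D ω))) := by exact hS2_int.sub hIe
    have h1 : ∫ ω, g ω ^ 2 = ∫ ω, (S ω ^ 2 - 2 * (S ω * b (D ω))) + b (D ω) ^ 2 :=
      integral_congr_ae (Filter.Eventually.of_forall fun ω => by simp only [hg_def]; ring)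
    rw [h1, integral_add hId hbD2_int, integral_sub hS2_int hIe, integral_const_mul, hPSb,
      hVarS, hVarbD]
    ring
  -- the main integrand
  have hptw : ∀ ω, |D ω - δ| * |b (D ω) - b δ| = (b (D ω) - b δ) * (D ω - δ) := by
    intro ω
    have h0 : 0 ≤ (b (D ω) - b δ) * (D ω - δ) := by
      rcases le_total (D ω) δ with h | h
      · have hb := hb_mono h
        nlinarith [mul_nonneg (by linarith : (0:ℝ) ≤ b δ - b (D ω)) (by linarith : (0:ℝ) ≤ δ - D ω)]
      · have hb := hb_mono h
        exact mul_nonneg (by linarith) (by linarith)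
    rw [← abs_of_nonneg h0, abs_mul, mul_comm]
  have hbDbδ_int : Integrable (fun ω => (b (D ω) - b δ) * (D ω - δ)) :=
    hD1.bdd_mul (c := 2) (hbD_meas.sub measurable_const).aestronglyMeasurable
      (Filter.Eventually.of_forall fun ω => by
        have := hbD_bdd ω
        have h1 : |b δ| ≤ 1 := abs_le.2 ⟨(hb_range δ).1.le, (hb_range δ).2.le⟩
        simp only [Real.norm_eq_abs] at *
        calc |b (D ω) - b δ| ≤ |b (D ω)| + |b δ| := abs_sub _ _
          _ ≤ 2 := by linarith)
  have hmain : ∫ ω, |D ω - δ| * |b (D ω) - b δ| =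
      K * variance (fun ω => b (D ω)) ℙ + K * variance S ℙ := by
    have h1 : ∫ ω, |D ω - δ| * |b (D ω) - b δ| = ∫ ω, (b (D ω) - b δ) * (D ω - δ) := by
      exact integral_congr_ae (Filter.Eventually.of_forall hptw)
    have h2 : ∫ ω, (b (D ω) - b δ) * (D ω - δ) =
        (∫ ω, b (D ω) * (D ω - δ)) - b δ * ∫ ω, D ω - δ := by
      have : (fun ω => (b (D ω) - b δ) * (D ω - δ)) =
          fun ω => b (D ω) * (D ω - δ) - b δ * (D ω - δ) := by
        funext ω; ring
      rw [this, integral_sub hDbD_int (hD1.const_mul _), integral_const_mul]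
    rw [h1, h2]
    have := hkey
    rw [hA, hB] at this
    linarith
  refine ⟨hmain, ?_, ?_⟩
  · rw [hmain]
    have h0 := variance_nonneg (fun ω => b (D ω)) ℙ
    have := mul_nonneg hK.le h0
    linarith
  · rw [hmain]
    have hint1 : (∫ ω, S ω ^ 2) ≤ 1 := by
      have : ∫ ω, S ω ^ 2 ≤ ∫ (_ : Ω), (1 : ℝ) := by
        refine integral_mono hS2_int (integrable_const 1) fun ω => ?_
        have := hS_bdd ω
        simp only [Real.norm_eq_abs] at this
        exact (sq_le_one_iff_abs_le_one (S ω)).2 this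
      simpa using this
    have hint2 : (∫ ω, b (D ω) ^ 2) ≤ 1 := by
      have : ∫ ω, b (D ω) ^ 2 ≤ ∫ (_ : Ω), (1 : ℝ) := by
        refine integral_mono hbD2_int (integrable_const 1) fun ω => ?_
        have := hbD_bdd ω
        simp only [Real.norm_eq_abs] at this
        exact (sq_le_one_iff_abs_le_one (b (D ω))).2 this
      simpa using this
    have h1 : variance S ℙ ≤ 1 := by
      rw [hVarS]; linarith [sq_nonneg (b δ)]
    have h2 : variance (fun ω => b (D ω)) ℙ ≤ 1 := by
      rw [hVarbD]; linarith [sq_nonneg (b δ)]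
    have k1 := mul_le_mul_of_nonneg_left h1 hK.le
    have k2 := mul_le_mul_of_nonneg_left h2 hK.le
    linarith
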